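/- (Theorem 1, second bound.) In the smoothing spline truncation setting with Hilbert-space expansions, ‖f̃₁ − f̂₁‖² ≤ ζ₃ ‖Σ̃ − Σ‖_F² + n κ² ‖c‖² D_K. -/

import Mathlib

open Matrix BigOperators

/-- Squared Frobenius norm of a real matrix. -/
noncomputable def frobSq {m n : ℕ} (M : Matrix (Fin m) (Fin n) ℝ) : ℝ :=
  ∑ i, ∑ j, (M i j) ^ 2

/-- Squared Euclidean norm of a real vector. -/
noncomputable def vnormSq {m : ℕ} (v : Fin m → ℝ) : ℝ := ∑ i, (v i) ^ 2

lemma vnormSq_nonneg {m : ℕ} (v : Fin m → ℝ) : 0 ≤ vnormSq v :=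
  Finset.sum_nonneg fun _ _ => sq_nonneg _

lemma frobSq_nonneg {m q : ℕ} (M : Matrix (Fin m) (Fin q) ℝ) : 0 ≤ frobSq M :=
  Finset.sum_nonneg fun _ _ => Finset.sum_nonneg fun _ _ => sq_nonneg _

lemma vnormSq_eq_dot {m : ℕ} (v : Fin m → ℝ) : vnormSq v = v ⬝ᵥ v := by
  simp [vnormSq, dotProduct, pow_two]

lemma vnormSq_mulVec_le {m q : ℕ} (M : Matrix (Fin m) (Fin q) ℝ) (x : Fin q → ℝ) :
    vnormSq (M *ᵥ x) ≤ frobSq M * vnormSq x := by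
  rw [vnormSq, frobSq, Finset.sum_mul]
  refine Finset.sum_le_sum fun i _ => ?_
  exact Finset.sum_mul_sq_le_sq_mul_sq Finset.univ (fun j => M i j) x

lemma vnormSq_mulVec_orth {m q : ℕ} (Q : Matrix (Fin m) (Fin q) ℝ)
    (hQ : Qᵀ * Q = 1) (x : Fin q → ℝ) : vnormSq (Q *ᵥ x) = vnormSq x := by
  have h : Qᵀ *ᵥ (Q *ᵥ x) = x := by rw [mulVec_mulVec, hQ, one_mulVec]
  rw [vnormSq_eq_dot, vnormSq_eq_dot, dotProduct_mulVec, ← transpose_transpose Q,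
    vecMul_transpose, transpose_transpose, h]

lemma quad_lower {m : ℕ} (A : Matrix (Fin m) (Fin m) ℝ) (hA : A.IsHermitian) (μ : ℝ)
    (hμ : ∀ j, μ ≤ hA.eigenvalues j) (v : Fin m → ℝ) :
    μ * vnormSq v ≤ v ⬝ᵥ (A *ᵥ v) := by
  classical
  set V : Matrix (Fin m) (Fin m) ℝ := (hA.eigenvectorUnitary : Matrix (Fin m) (Fin m) ℝ) with hVdef
  have hV1 : star V * V = 1 := hA.eigenvectorUnitary.2.1
  have hV2 : V * star V = 1 := hA.eigenvectorUnitary.2.2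
  have hstar : star V = Vᵀ := by
    ext i j; simp [Matrix.star_apply]
  set u := Vᵀ *ᵥ v with hu
  have hvec : v ᵥ* V = u := (mulVec_transpose V v).symm
  have hnorm : vnormSq u = vnormSq v := by
    have hQ : (Vᵀ)ᵀ * Vᵀ = 1 := by
      rw [transpose_transpose, ← hstar, hV2]
    exact vnormSq_mulVec_orth Vᵀ hQ v
  have hAv : v ⬝ᵥ (A *ᵥ v) = ∑ j, hA.eigenvalues j * (u j)^2 := by
    conv_lhs => rw [hA.spectral_theorem, Unitary.conjStarAlgAut_apply, ← hVdef, ← mulVec_mulVec, ← mulVec_mulVec, hstar]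
    rw [dotProduct_mulVec, hvec]
    simp [dotProduct, mulVec_diagonal, RCLike.ofReal_real_eq_id]
    apply Finset.sum_congr rfl
    intro j _
    ring
  rw [hAv, ← hnorm, vnormSq]
  rw [Finset.mul_sum]
  refine Finset.sum_le_sum fun j _ => ?_
  exact mul_le_mul_of_nonneg_right (hμ j) (sq_nonneg _)

lemma key {m : ℕ} (A : Matrix (Fin m) (Fin m) ℝ) (hA : A.PosDef) (t : ℝ) (ht : 0 ≤ t)
    (v : Fin m → ℝ) :
    vnormSq v ≤ (∑ k, ((hA.1.eigenvalues k) ^ 2)⁻¹) * vnormSq ((A + t • 1) *ᵥ v) := by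
  classical
  rcases isEmpty_or_nonempty (Fin m) with hm | hm
  · simp [vnormSq]
  set W := vnormSq ((A + t • 1) *ᵥ v) with hW
  have hWnn : 0 ≤ W := vnormSq_nonneg _
  have hBnn : ∀ k : Fin m, (0:ℝ) ≤ ((hA.1.eigenvalues k) ^ 2)⁻¹ :=
    fun k => inv_nonneg.2 (sq_nonneg _)
  by_cases hv : vnormSq v = 0
  · rw [hv]
    exact mul_nonneg (Finset.sum_nonneg fun k _ => hBnn k) hWnn
  have hvpos : 0 < vnormSq v := lt_of_le_of_ne (vnormSq_nonneg v) (Ne.symm hv)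
  obtain ⟨j₀, _, hj₀⟩ := Finset.exists_min_image Finset.univ hA.1.eigenvalues
    ⟨Classical.arbitrary _, Finset.mem_univ _⟩
  set μ := hA.1.eigenvalues j₀ with hμdef
  have hμpos : 0 < μ := hA.eigenvalues_pos j₀
  have h1 : μ * vnormSq v ≤ v ⬝ᵥ ((A + t • 1) *ᵥ v) := by
    have hq := quad_lower A hA.1 μ (fun j => hj₀ j (Finset.mem_univ j)) v
    have hexp : v ⬝ᵥ ((A + t • 1) *ᵥ v) = v ⬝ᵥ (A *ᵥ v) + t * (v ⬝ᵥ v) := by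
      rw [add_mulVec, dotProduct_add, smul_mulVec, one_mulVec, dotProduct_smul]
      rfl
    have hdot : (0:ℝ) ≤ v ⬝ᵥ v := by rw [← vnormSq_eq_dot]; exact vnormSq_nonneg v
    nlinarith
  have h2 : (v ⬝ᵥ ((A + t • 1) *ᵥ v)) ^ 2 ≤ vnormSq v * W := by
    rw [hW, vnormSq, vnormSq]
    exact Finset.sum_mul_sq_le_sq_mul_sq Finset.univ v _
  have h3 : μ ^ 2 * vnormSq v ≤ W := by
    have hsq : (μ * vnormSq v) ^ 2 ≤ (v ⬝ᵥ ((A + t • 1) *ᵥ v)) ^ 2 :=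
      pow_le_pow_left₀ (by positivity) h1 2
    have hmul : μ ^ 2 * vnormSq v * vnormSq v ≤ W * vnormSq v := by nlinarith [h2]
    exact le_of_mul_le_mul_right hmul hvpos
  have h4 : vnormSq v ≤ (μ ^ 2)⁻¹ * W := by
    rw [← div_eq_inv_mul, le_div_iff₀ (by positivity : (0:ℝ) < μ ^ 2)]
    linarith [h3]
  refine h4.trans (mul_le_mul_of_nonneg_right ?_ hWnn)
  exact Finset.single_le_sum (fun k _ => hBnn k) (Finset.mem_univ j₀)

lemma sq_summable_of_abs {g : ℕ → ℝ} (hg : Summable fun k => |g k|) :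
    Summable fun k => g k ^ 2 := by
  refine Summable.of_nonneg_of_le (fun k => sq_nonneg _) (fun k => ?_)
    (hg.mul_left (∑' j, |g j|))
  have hle : |g k| ≤ ∑' j, |g j| := Summable.le_tsum hg k fun j _ => abs_nonneg _
  calc g k ^ 2 = |g k| * |g k| := by rw [abs_mul_abs_self, pow_two]
    _ ≤ (∑' j, |g j|) * |g k| := mul_le_mul_of_nonneg_right hle (abs_nonneg _)

lemma orth_tsum_normSq {H : Type*} [NormedAddCommGroup H] [InnerProductSpace ℝ H]
    [CompleteSpace H] (Φ : ℕ → H) (hΦ : Orthonormal ℝ Φ) (g : ℕ → ℝ)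
    (hg : Summable fun k => |g k|) :
    ‖∑' k, g k • Φ k‖ ^ 2 = ∑' k, g k ^ 2 := by
  have hnorm1 : ∀ k, ‖g k • Φ k‖ = |g k| := by
    intro k
    rw [norm_smul, hΦ.1 k, mul_one, Real.norm_eq_abs]
  have hgs : Summable fun k => g k • Φ k := by
    apply Summable.of_norm
    simpa only [hnorm1] using hg
  have hgsq : Summable fun k => g k ^ 2 := sq_summable_of_abs hg
  have hsum := hgs.hasSum
  have h1 : Filter.Tendsto (fun s : Finset ℕ => ‖∑ k ∈ s, g k • Φ k‖ ^ 2) Filter.atTop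
      (nhds (‖∑' k, g k • Φ k‖ ^ 2)) :=
    ((continuous_norm.pow 2).tendsto _).comp hsum
  have heq : ∀ s : Finset ℕ, ‖∑ k ∈ s, g k • Φ k‖ ^ 2 = ∑ k ∈ s, g k ^ 2 := by
    intro s
    rw [← real_inner_self_eq_norm_sq, hΦ.inner_sum g g s]
    exact Finset.sum_congr rfl fun k _ => by simp [pow_two]
  rw [funext heq] at h1
  exact tendsto_nhds_unique h1 hgsq.hasSum

set_option maxHeartbeats 1000000

/-- Theorem 1, second bound: in the smoothing spline truncation setting with
Hilbert-space expansions, `‖f̃₁ − f̂₁‖² ≤ ζ₃ ‖Σ̃ − Σ‖_F² + n κ² ‖c‖² D_K`, where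
`ζ₃ = n κ² C_K ζ₁ B B̃`, `C_K = Σ_{k=1}^K δ_k²`, `D_K = Σ_{k=K+1}^∞ δ_k²`. -/
theorem stmt10
    (n p : ℕ) (hp : 1 ≤ p) (hpn : p < n)
    (y : Fin n → ℝ) (lam : ℝ) (hlam : 0 < lam)
    (T Q₁ : Matrix (Fin n) (Fin p) ℝ) (Q₂ : Matrix (Fin n) (Fin (n - p)) ℝ)
    (R : Matrix (Fin p) (Fin p) ℝ)
    (hQ₁ : Q₁ᵀ * Q₁ = 1) (hQ₂ : Q₂ᵀ * Q₂ = 1) (hQ₁₂ : Q₁ᵀ * Q₂ = 0)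
    (hQ : Q₁ * Q₁ᵀ + Q₂ * Q₂ᵀ = 1)
    (hR : IsUnit R) (hRtri : R.BlockTriangular id) (hT : T = Q₁ * R)
    (K : ℕ) (hK : 1 ≤ K) (κ : ℝ) (hκ : 0 < κ)
    (δ : ℕ → ℝ) (hδ0 : ∀ k, 0 ≤ δ k) (hδmono : ∀ k, δ (k + 1) ≤ δ k) (hδsum : Summable δ)
    (U : Fin n → ℕ → ℝ) (hU : ∀ i k, |U i k| ≤ κ)
    (S St : Matrix (Fin n) (Fin n) ℝ)
    (hS : ∀ i j, S i j = ∑' k, δ k * U i k * U j k)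
    (hSt : ∀ i j, St i j = ∑ k ∈ Finset.range K, δ k * U i k * U j k)
    (hSpsd : S.PosSemidef) (hStpsd : St.PosSemidef)
    (hpd : (Q₂ᵀ * S * Q₂).PosDef) (hpdt : (Q₂ᵀ * St * Q₂).PosDef)
    (hA : (T * ((Tᵀ * T)⁻¹ * (Tᵀ * T)⁻¹) * Tᵀ).IsHermitian)
    (c : Fin n → ℝ) (d : Fin p → ℝ)
    (hcd : T *ᵥ d + (S + ((n : ℝ) * lam) • 1) *ᵥ c = y) (hc0 : Tᵀ *ᵥ c = 0)
    (ct : Fin n → ℝ) (dt : Fin p → ℝ)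
    (hcdt : T *ᵥ dt + (St + ((n : ℝ) * lam) • 1) *ᵥ ct = y) (hct0 : Tᵀ *ᵥ ct = 0)
    {H : Type*} [NormedAddCommGroup H] [InnerProductSpace ℝ H] [CompleteSpace H]
    (φ : Fin p → H) (Φ : ℕ → H) (hφ : Orthonormal ℝ φ) (hΦ : Orthonormal ℝ Φ) :
    ‖(∑ k ∈ Finset.range K, (δ k * ∑ i, ct i * U i k) • Φ k) -
        (∑' k, (δ k * ∑ i, c i * U i k) • Φ k)‖ ^ 2 ≤
      ((n : ℝ) * κ ^ 2 * (∑ k ∈ Finset.range K, δ k ^ 2) *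
          ((frobSq Q₂) ^ 3 * vnormSq (Q₂ᵀ *ᵥ y)) *
          (∑ k, ((hpd.1.eigenvalues k) ^ 2)⁻¹) *
          (∑ k, ((hpdt.1.eigenvalues k) ^ 2)⁻¹)) * frobSq (St - S) +
        (n : ℝ) * κ ^ 2 * vnormSq c * (∑' k, δ (k + K) ^ 2) := by
  classical
  -- abbreviations
  set t : ℝ := (n : ℝ) * lam with htdef
  have ht : 0 ≤ t := by positivity
  have hB : (0:ℝ) ≤ ∑ k, ((hpd.1.eigenvalues k) ^ 2)⁻¹ :=
    Finset.sum_nonneg fun k _ => inv_nonneg.2 (sq_nonneg _)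
  have hBt : (0:ℝ) ≤ ∑ k, ((hpdt.1.eigenvalues k) ^ 2)⁻¹ :=
    Finset.sum_nonneg fun k _ => inv_nonneg.2 (sq_nonneg _)
  have hWnn : 0 ≤ vnormSq (Q₂ᵀ *ᵥ y) := vnormSq_nonneg _
  have hnκ : (0:ℝ) ≤ (n : ℝ) * κ ^ 2 := by positivity
  -- Step 1 : Q₁ᵀ c = 0 and c = Q₂ (Q₂ᵀ c)
  have hRT : IsUnit Rᵀ := (Matrix.isUnit_transpose R).2 hR
  have hinj := Matrix.mulVec_injective_iff_isUnit.2 hRT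
  have hQ1c : Q₁ᵀ *ᵥ c = 0 := by
    have h : Rᵀ *ᵥ (Q₁ᵀ *ᵥ c) = 0 := by
      rw [mulVec_mulVec, ← transpose_mul, ← hT, hc0]
    exact hinj (h.trans (Matrix.mulVec_zero Rᵀ).symm)
  have hQ1ct : Q₁ᵀ *ᵥ ct = 0 := by
    have h : Rᵀ *ᵥ (Q₁ᵀ *ᵥ ct) = 0 := by
      rw [mulVec_mulVec, ← transpose_mul, ← hT, hct0]
    exact hinj (h.trans (Matrix.mulVec_zero Rᵀ).symm)
  set z := Q₂ᵀ *ᵥ c with hz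
  set zt := Q₂ᵀ *ᵥ ct with hzt
  have hc : c = Q₂ *ᵥ z := by
    calc c = (Q₁ * Q₁ᵀ + Q₂ * Q₂ᵀ) *ᵥ c := by rw [hQ, one_mulVec]
      _ = Q₁ *ᵥ (Q₁ᵀ *ᵥ c) + Q₂ *ᵥ (Q₂ᵀ *ᵥ c) := by
          rw [add_mulVec, ← mulVec_mulVec, ← mulVec_mulVec]
      _ = Q₂ *ᵥ z := by rw [hQ1c, mulVec_zero, zero_add]
  have hct : ct = Q₂ *ᵥ zt := by
    calc ct = (Q₁ * Q₁ᵀ + Q₂ * Q₂ᵀ) *ᵥ ct := by rw [hQ, one_mulVec]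
      _ = Q₁ *ᵥ (Q₁ᵀ *ᵥ ct) + Q₂ *ᵥ (Q₂ᵀ *ᵥ ct) := by
          rw [add_mulVec, ← mulVec_mulVec, ← mulVec_mulVec]
      _ = Q₂ *ᵥ zt := by rw [hQ1ct, mulVec_zero, zero_add]
  -- Step 2 : reduced linear systems
  have hQ₂T : Q₂ᵀ * T = 0 := by
    have h21 : Q₂ᵀ * Q₁ = 0 := by
      have := congrArg Matrix.transpose hQ₁₂
      simpa [Matrix.transpose_mul] using this
    rw [hT, ← Matrix.mul_assoc, h21, Matrix.zero_mul]
  have hMz : (Q₂ᵀ * S * Q₂ + t • 1) *ᵥ z = Q₂ᵀ *ᵥ y := by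
    have h := congrArg (fun v => Q₂ᵀ *ᵥ v) hcd
    simp only [mulVec_add] at h
    rw [mulVec_mulVec, hQ₂T, zero_mulVec, zero_add] at h
    rw [add_mulVec, smul_mulVec, one_mulVec, mulVec_add, mulVec_smul, ← hz] at h
    rw [hc, mulVec_mulVec, mulVec_mulVec] at h
    rw [add_mulVec, smul_mulVec, one_mulVec]
    exact h
  have hMzt : (Q₂ᵀ * St * Q₂ + t • 1) *ᵥ zt = Q₂ᵀ *ᵥ y := by
    have h := congrArg (fun v => Q₂ᵀ *ᵥ v) hcdt
    simp only [mulVec_add] at h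
    rw [mulVec_mulVec, hQ₂T, zero_mulVec, zero_add] at h
    rw [add_mulVec, smul_mulVec, one_mulVec, mulVec_add, mulVec_smul, ← hzt] at h
    rw [hct, mulVec_mulVec, mulVec_mulVec] at h
    rw [add_mulVec, smul_mulVec, one_mulVec]
    exact h
  have hdiff : (Q₂ᵀ * St * Q₂ + t • 1) *ᵥ (zt - z) = (Q₂ᵀ * (S - St) * Q₂) *ᵥ z := by
    have hMsub : Q₂ᵀ * (S - St) * Q₂ = Q₂ᵀ * S * Q₂ - Q₂ᵀ * St * Q₂ := by
      rw [Matrix.mul_sub, Matrix.sub_mul]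
    rw [mulVec_sub, hMzt, hMsub, sub_mulVec, ← hMz]
    rw [add_mulVec, add_mulVec]
    abel
  -- Step 3 : norm bounds
  have hkey1 : vnormSq z ≤ (∑ k, ((hpd.1.eigenvalues k) ^ 2)⁻¹) * vnormSq (Q₂ᵀ *ᵥ y) := by
    have := key (Q₂ᵀ * S * Q₂) hpd t ht z
    rwa [hMz] at this
  have hkey2 : vnormSq (zt - z) ≤
      (∑ k, ((hpdt.1.eigenvalues k) ^ 2)⁻¹) * vnormSq ((Q₂ᵀ * (S - St) * Q₂) *ᵥ z) := by
    have := key (Q₂ᵀ * St * Q₂) hpdt t ht (zt - z)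
    rwa [hdiff] at this
  have hproj : vnormSq (Q₂ᵀ *ᵥ ((S - St) *ᵥ (Q₂ *ᵥ z))) ≤ vnormSq ((S - St) *ᵥ (Q₂ *ᵥ z)) := by
    set x := (S - St) *ᵥ (Q₂ *ᵥ z)
    have e : ∀ (q : ℕ) (Q : Matrix (Fin n) (Fin q) ℝ),
        vnormSq (Qᵀ *ᵥ x) = ((Q * Qᵀ) *ᵥ x) ⬝ᵥ x := by
      intro q Q
      rw [vnormSq_eq_dot, dotProduct_mulVec, vecMul_transpose, mulVec_mulVec]
    have hsum : vnormSq (Q₁ᵀ *ᵥ x) + vnormSq (Q₂ᵀ *ᵥ x) = vnormSq x := by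
      rw [e p Q₁, e (n - p) Q₂, ← add_dotProduct, ← add_mulVec, hQ, one_mulVec, ← vnormSq_eq_dot]
    linarith [vnormSq_nonneg (Q₁ᵀ *ᵥ x)]
  have hmid : vnormSq ((Q₂ᵀ * (S - St) * Q₂) *ᵥ z) ≤ frobSq (St - S) * vnormSq z := by
    have hfrobcomm : frobSq (S - St) = frobSq (St - S) := by
      unfold frobSq
      refine Finset.sum_congr rfl fun i _ => Finset.sum_congr rfl fun j _ => ?_
      simp only [Matrix.sub_apply]
      ring
    have hsplit : (Q₂ᵀ * (S - St) * Q₂) *ᵥ z = Q₂ᵀ *ᵥ ((S - St) *ᵥ (Q₂ *ᵥ z)) := by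
      conv_rhs => rw [mulVec_mulVec, mulVec_mulVec]
    rw [hsplit]
    refine hproj.trans ?_
    have h2 := vnormSq_mulVec_le (S - St) (Q₂ *ᵥ z)
    rwa [vnormSq_mulVec_orth Q₂ hQ₂ z, hfrobcomm] at h2
  have hvdc : vnormSq (ct - c) = vnormSq (zt - z) := by
    have hdc : ct - c = Q₂ *ᵥ (zt - z) := by rw [hc, hct, ← mulVec_sub]
    rw [hdc, vnormSq_mulVec_orth Q₂ hQ₂]
  have hF1 : (1:ℝ) ≤ (frobSq Q₂) ^ 3 := by
    have hdiag : ∀ j, ∑ i, Q₂ i j ^ 2 = 1 := by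
      intro j
      have h := congrFun (congrFun hQ₂ j) j
      simpa [Matrix.mul_apply, Matrix.one_apply, pow_two] using h
    have hfq : frobSq Q₂ = ((n - p : ℕ) : ℝ) := by
      rw [frobSq, Finset.sum_comm]
      simp [hdiag]
    have h1 : (1:ℝ) ≤ frobSq Q₂ := by
      rw [hfq]
      exact_mod_cast (by omega : 1 ≤ n - p)
    calc (1:ℝ) = 1 ^ 3 := by norm_num
      _ ≤ (frobSq Q₂) ^ 3 := pow_le_pow_left₀ (by norm_num) h1 3
  -- master matrix bound
  have hmain : vnormSq (ct - c) ≤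
      (∑ k, ((hpdt.1.eigenvalues k) ^ 2)⁻¹) * (frobSq (St - S) *
        ((∑ k, ((hpd.1.eigenvalues k) ^ 2)⁻¹) * ((frobSq Q₂) ^ 3 * vnormSq (Q₂ᵀ *ᵥ y)))) := by
    rw [hvdc]
    refine hkey2.trans (mul_le_mul_of_nonneg_left ?_ hBt)
    refine hmid.trans (mul_le_mul_of_nonneg_left ?_ (frobSq_nonneg _))
    refine hkey1.trans (mul_le_mul_of_nonneg_left ?_ hB)
    exact le_mul_of_one_le_left hWnn hF1
  -- Step 4 : series estimates
  have hCS : ∀ (x : Fin n → ℝ) (k : ℕ),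
      (∑ i, x i * U i k) ^ 2 ≤ vnormSq x * ((n:ℝ) * κ ^ 2) := by
    intro x k
    have h1 := Finset.sum_mul_sq_le_sq_mul_sq Finset.univ x (fun i => U i k)
    have h2 : (∑ i : Fin n, U i k ^ 2) ≤ (n:ℝ) * κ ^ 2 := by
      calc ∑ i : Fin n, U i k ^ 2 ≤ ∑ _i : Fin n, κ ^ 2 :=
            Finset.sum_le_sum fun i _ => by
              have h := abs_le.mp (hU i k)
              exact sq_le_sq' (neg_le.mp (neg_le.mpr h.1)) h.2
        _ = (n:ℝ) * κ ^ 2 := by simp [Finset.sum_const, Finset.card_univ, nsmul_eq_mul]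
    calc (∑ i, x i * U i k) ^ 2 ≤ (∑ i, x i ^ 2) * (∑ i, U i k ^ 2) := h1
      _ = vnormSq x * (∑ i, U i k ^ 2) := rfl
      _ ≤ vnormSq x * ((n:ℝ) * κ ^ 2) := mul_le_mul_of_nonneg_left h2 (vnormSq_nonneg x)
  have hδle : ∀ k, δ k ≤ δ 0 := by
    intro k
    induction k with
    | zero => exact le_refl _
    | succ k ih => exact (hδmono k).trans ih
  have hδ2 : Summable fun k => δ k ^ 2 := by
    refine Summable.of_nonneg_of_le (fun k => sq_nonneg _) (fun k => ?_) (hδsum.mul_left (δ 0))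
    calc δ k ^ 2 = δ k * δ k := sq (δ k) ▸ rfl
      _ ≤ δ 0 * δ k := mul_le_mul_of_nonneg_right (hδle k) (hδ0 k)
  have habs : ∀ (x : Fin n → ℝ) (k : ℕ),
      |δ k * ∑ i, x i * U i k| ≤ (κ * ∑ i, |x i|) * δ k := by
    intro x k
    rw [abs_mul]
    have h : |∑ i, x i * U i k| ≤ κ * ∑ i, |x i| := by
      calc |∑ i, x i * U i k| ≤ ∑ i, |x i * U i k| := Finset.abs_sum_le_sum_abs _ _
        _ ≤ ∑ i, |x i| * κ := Finset.sum_le_sum fun i _ => by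
            rw [abs_mul]
            exact mul_le_mul_of_nonneg_left (hU i k) (abs_nonneg _)
        _ = κ * ∑ i, |x i| := by rw [← Finset.sum_mul]; ring
    calc |δ k| * |∑ i, x i * U i k| ≤ |δ k| * (κ * ∑ i, |x i|) :=
          mul_le_mul_of_nonneg_left h (abs_nonneg _)
      _ = (κ * ∑ i, |x i|) * δ k := by rw [abs_of_nonneg (hδ0 k)]; ring
    -- Step 5 : series assembly
  have hsaa : Summable fun k => |δ k * ∑ i, c i * U i k| :=
    Summable.of_nonneg_of_le (fun k => abs_nonneg _) (fun k => habs c k)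
      (hδsum.mul_left (κ * ∑ i, |c i|))
  have hsatt0 : Summable fun k => |if k < K then δ k * ∑ i, ct i * U i k else 0| :=
    summable_of_ne_finset_zero (s := Finset.range K) (fun b hb => by
      rw [if_neg (by simpa using hb), abs_zero])
  set g : ℕ → ℝ := fun k =>
    (if k < K then δ k * ∑ i, ct i * U i k else 0) - δ k * ∑ i, c i * U i k with hgdef
  have hgabs : Summable fun k => |g k| := by
    refine Summable.of_nonneg_of_le (fun k => abs_nonneg _) (fun k => ?_) (hsatt0.add hsaa)
    rw [hgdef]
    dsimp only
    rw [sub_eq_add_neg]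
    exact (abs_add_le _ _).trans (by rw [abs_neg])
  have hg2 : Summable fun k => g k ^ 2 := sq_summable_of_abs hgabs
  have hvec_ite : Summable fun k => (if k < K then δ k * ∑ i, ct i * U i k else 0) • Φ k := by
    apply Summable.of_norm
    have hn : ∀ k : ℕ, ‖(if k < K then δ k * ∑ i, ct i * U i k else 0) • Φ k‖ =
        |if k < K then δ k * ∑ i, ct i * U i k else 0| := fun k => by
      rw [norm_smul, hΦ.1 k, mul_one, Real.norm_eq_abs]
    simpa only [hn] using hsatt0
  have hvec_aa : Summable fun k => (δ k * ∑ i, c i * U i k) • Φ k := by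
    apply Summable.of_norm
    have hn : ∀ k : ℕ, ‖(δ k * ∑ i, c i * U i k) • Φ k‖ =
        |δ k * ∑ i, c i * U i k| := fun k => by
      rw [norm_smul, hΦ.1 k, mul_one, Real.norm_eq_abs]
    simpa only [hn] using hsaa
  have hfin : (∑ k ∈ Finset.range K, (δ k * ∑ i, ct i * U i k) • Φ k)
      = ∑' k, (if k < K then δ k * ∑ i, ct i * U i k else 0) • Φ k := by
    rw [tsum_eq_sum (s := Finset.range K)
      (fun b hb => by rw [if_neg (by simpa using hb), zero_smul])]
    exact Finset.sum_congr rfl fun k hk => by rw [if_pos (Finset.mem_range.mp hk)]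
  have hLv : (∑ k ∈ Finset.range K, (δ k * ∑ i, ct i * U i k) • Φ k) -
      (∑' k, (δ k * ∑ i, c i * U i k) • Φ k) = ∑' k, g k • Φ k := by
    rw [hfin, ← Summable.tsum_sub hvec_ite hvec_aa]
    exact tsum_congr fun k => (sub_smul _ _ _).symm
  rw [hLv, orth_tsum_normSq Φ hΦ g hgabs, ← Summable.sum_add_tsum_nat_add K hg2]
  have hCK : (0:ℝ) ≤ ∑ k ∈ Finset.range K, δ k ^ 2 :=
    Finset.sum_nonneg fun k _ => sq_nonneg _
  refine add_le_add ?_ ?_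
  · -- head estimate
    have hhead : ∑ k ∈ Finset.range K, g k ^ 2 ≤
        (∑ k ∈ Finset.range K, δ k ^ 2) * (vnormSq (ct - c) * ((n:ℝ) * κ ^ 2)) := by
      rw [Finset.sum_mul]
      refine Finset.sum_le_sum fun k hk => ?_
      have hk' : k < K := Finset.mem_range.mp hk
      have hgk : g k = δ k * (∑ i, (ct i - c i) * U i k) := by
        rw [hgdef]
        dsimp only
        rw [if_pos hk', ← mul_sub, ← Finset.sum_sub_distrib]
        congr 1
        exact Finset.sum_congr rfl fun i _ => by ring
      rw [hgk, mul_pow]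
      have hcs := hCS (fun i => ct i - c i) k
      have hv : vnormSq (fun i => ct i - c i) = vnormSq (ct - c) := rfl
      rw [hv] at hcs
      exact mul_le_mul_of_nonneg_left hcs (sq_nonneg _)
    calc ∑ k ∈ Finset.range K, g k ^ 2
        ≤ (∑ k ∈ Finset.range K, δ k ^ 2) * (vnormSq (ct - c) * ((n:ℝ) * κ ^ 2)) := hhead
      _ ≤ (∑ k ∈ Finset.range K, δ k ^ 2) *
            (((∑ k, ((hpdt.1.eigenvalues k) ^ 2)⁻¹) * (frobSq (St - S) *
              ((∑ k, ((hpd.1.eigenvalues k) ^ 2)⁻¹) *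
                ((frobSq Q₂) ^ 3 * vnormSq (Q₂ᵀ *ᵥ y))))) * ((n:ℝ) * κ ^ 2)) :=
          mul_le_mul_of_nonneg_left (mul_le_mul_of_nonneg_right hmain hnκ) hCK
      _ = ((n : ℝ) * κ ^ 2 * (∑ k ∈ Finset.range K, δ k ^ 2) *
            ((frobSq Q₂) ^ 3 * vnormSq (Q₂ᵀ *ᵥ y)) *
            (∑ k, ((hpd.1.eigenvalues k) ^ 2)⁻¹) *
            (∑ k, ((hpdt.1.eigenvalues k) ^ 2)⁻¹)) * frobSq (St - S) := by ring
  · -- tail estimate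
    have htail : ∀ j : ℕ, g (j + K) ^ 2 ≤ (vnormSq c * ((n:ℝ) * κ ^ 2)) * δ (j + K) ^ 2 := by
      intro j
      have hKj : ¬ (j + K < K) := by omega
      have hgj : g (j + K) = -(δ (j + K) * ∑ i, c i * U i (j + K)) := by
        rw [hgdef]
        dsimp only
        rw [if_neg hKj, zero_sub]
      rw [hgj, neg_sq, mul_pow]
      calc δ (j + K) ^ 2 * (∑ i, c i * U i (j + K)) ^ 2
          ≤ δ (j + K) ^ 2 * (vnormSq c * ((n:ℝ) * κ ^ 2)) :=
            mul_le_mul_of_nonneg_left (hCS c (j + K)) (sq_nonneg _)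
        _ = (vnormSq c * ((n:ℝ) * κ ^ 2)) * δ (j + K) ^ 2 := by ring
    calc ∑' j, g (j + K) ^ 2
        ≤ ∑' j, (vnormSq c * ((n:ℝ) * κ ^ 2)) * δ (j + K) ^ 2 :=
          Summable.tsum_le_tsum htail ((summable_nat_add_iff K).2 hg2)
            ((((summable_nat_add_iff K).2 hδ2)).mul_left _)
      _ = (vnormSq c * ((n:ℝ) * κ ^ 2)) * ∑' j, δ (j + K) ^ 2 := tsum_mul_left
      _ = (n : ℝ) * κ ^ 2 * vnormSq c * (∑' k, δ (k + K) ^ 2) := by ring
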